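/- Let F be an infinite field, V a finite-dimensional vector space over F, A ∈ End(V), v ∈ V, and φ ∈ V^*. If φ(f(A)² v) = 0 for every polynomial f ∈ F[x] that is coprime to the characteristic polynomial of A, then φ(f(A)² v) = 0 for every polynomial f ∈ F[x]. -/

import Mathlib

open Polynomial

theorem stmt7 {F V : Type*} [Field F] [Infinite F]
    [AddCommGroup V] [Module F V] [FiniteDimensional F V]
    (A : Module.End F V) (v : V) (φ : Module.Dual F V)
    (h : ∀ f : Polynomial F, IsCoprime f A.charpoly →
      φ (((Polynomial.aeval A f) ^ 2) v) = 0) :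
    ∀ f : Polynomial F, φ (((Polynomial.aeval A f) ^ 2) v) = 0 := by
  classical
  intro f
  set χ := A.charpoly with hχdef
  have hχ0 : χ ≠ 0 := A.charpoly_monic.ne_zero
  set B := Polynomial.aeval A f with hB
  set a := φ ((B ^ 2) v) with ha
  set b := φ (B v) with hb
  set c0 := φ v with hc0
  -- key evaluation
  have key : ∀ t : F, φ (((Polynomial.aeval A (f + Polynomial.C t)) ^ 2) v)
      = a + 2 * b * t + c0 * t ^ 2 := by
    intro t
    have h1 : Polynomial.aeval A (f + Polynomial.C t)
        = B + algebraMap F (Module.End F V) t := by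
      simp [hB]
    rw [h1, sq, add_mul, mul_add, mul_add]
    have hsc : ∀ (w : V), (algebraMap F (Module.End F V) t) w = t • w := by
      intro w; simp [Module.algebraMap_end_apply]
    simp only [LinearMap.add_apply, Module.End.mul_apply, hsc, map_add, map_smul,
      smul_smul, φ.map_smul]
    simp only [ha, hb, hc0, sq, smul_eq_mul, Module.End.mul_apply]
    ring
  -- the bad set is finite
  set S : Set F := {t : F | ¬ IsCoprime (f + Polynomial.C t) χ} with hS
  have hSfin : S.Finite := by
    have hg : ∀ t ∈ S, ∃ q : Polynomial F,
        q ∈ UniqueFactorizationMonoid.normalizedFactors χ ∧ q ∣ (f + Polynomial.C t) := by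
      intro t ht
      have hgcd : ¬ IsUnit (EuclideanDomain.gcd (f + Polynomial.C t) χ) := by
        intro hu
        exact ht (EuclideanDomain.gcd_isUnit_iff.mp hu)
      have hgcd0 : EuclideanDomain.gcd (f + Polynomial.C t) χ ≠ 0 := by
        intro h0
        exact hχ0 ((EuclideanDomain.gcd_eq_zero_iff.mp h0).2)
      obtain ⟨p, hpirr, hpdvd⟩ := WfDvdMonoid.exists_irreducible_factor hgcd hgcd0
      have hpχ : p ∣ χ := hpdvd.trans (EuclideanDomain.gcd_dvd_right _ _)
      have hpf : p ∣ f + Polynomial.C t := hpdvd.trans (EuclideanDomain.gcd_dvd_left _ _)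
      obtain ⟨q, hqmem, hqassoc⟩ :=
        UniqueFactorizationMonoid.exists_mem_normalizedFactors_of_dvd hχ0 hpirr hpχ
      exact ⟨q, hqmem, (Associated.symm hqassoc).dvd.trans hpf⟩
    classical
    choose! g hg1 hg2 using hg
    have himg : (g '' S).Finite := by
      apply Set.Finite.subset
        ((UniqueFactorizationMonoid.normalizedFactors χ).toFinset : Finset (Polynomial F)).finite_toSet
      rintro _ ⟨t, ht, rfl⟩
      exact Finset.mem_coe.mpr (Multiset.mem_toFinset.mpr (hg1 t ht))
    refine Set.Finite.of_finite_image himg ?_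
    intro t ht t' ht' heq
    by_contra hne
    have hq := hg2 t ht
    have hq' := hg2 t' ht'
    rw [heq] at hq
    have hdvd : g t' ∣ Polynomial.C (t - t') := by
      have := dvd_sub hq hq'
      simpa [sub_sub_sub_cancel_left, Polynomial.C_sub] using this
    have hunit : IsUnit (Polynomial.C (t - t')) := by
      refine Polynomial.isUnit_C.mpr (isUnit_iff_ne_zero.mpr ?_)
      exact sub_ne_zero_of_ne hne
    have : IsUnit (g t') := isUnit_of_dvd_unit hdvd hunit
    exact (UniqueFactorizationMonoid.irreducible_of_normalized_factor _ (hg1 t' ht')).not_isUnit this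
  -- the quadratic polynomial
  set q : Polynomial F := Polynomial.C a + Polynomial.C (2 * b) * Polynomial.X
      + Polynomial.C c0 * Polynomial.X ^ 2 with hq
  have hroot : ∀ t ∉ S, q.IsRoot t := by
    intro t ht
    have hcop : IsCoprime (f + Polynomial.C t) χ := not_not.mp ht
    have := h (f + Polynomial.C t) hcop
    rw [key t] at this
    simp only [hq, Polynomial.IsRoot, Polynomial.eval_add, Polynomial.eval_mul,
      Polynomial.eval_C, Polynomial.eval_X, Polynomial.eval_pow]
    linear_combination this
  have hq0 : q = 0 := by
    apply Polynomial.eq_zero_of_infinite_isRoot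
    apply Set.Infinite.mono _ (hSfin.infinite_compl)
    intro t ht
    exact hroot t ht
  have : q.eval 0 = 0 := by rw [hq0]; simp
  simpa [hq] using this
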